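/- Let n ≥ 1, let g be a monic divisor of x^n − 1 in ℚ[x], and set f = (x^n − 1)/g. Define e_f = −(1/n)·((f*)′)*·g ∈ ℚ[x], where g* denotes the reciprocal polynomial and ′ the formal derivative. Then, in the quotient ring ℚ[x]/⟨x^n − 1⟩, the image of e_f is the principal idempotent of the ideal I generated by g: e_f² = e_f, e_f ∈ I, and e_f·h = h for every h ∈ I. -/

import Mathlib

open Polynomial

lemma rev_deriv (p : ℚ[X]) (hp : p.coeff 0 ≠ 0) :
    (derivative p.reverse).reverse = C (p.natDegree : ℚ) * p - X * derivative p := by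
  rcases Nat.eq_zero_or_pos p.natDegree with h0 | hpos
  · obtain ⟨c, rfl⟩ := Polynomial.natDegree_eq_zero.mp h0
    simp
  · have htr : p.natTrailingDegree = 0 := natTrailingDegree_eq_zero.mpr (Or.inr hp)
    have hrd : p.reverse.natDegree = p.natDegree := by
      rw [reverse_natDegree, htr, Nat.sub_zero]
    have hrpos : 0 < p.reverse.natDegree := hrd ▸ hpos
    have hdd : (derivative p.reverse).natDegree = p.natDegree - 1 := by
      have := degree_derivative_eq p.reverse hrpos
      rw [hrd] at this
      exact natDegree_eq_of_degree_eq_some this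
    ext k
    rw [coeff_reverse, hdd]
    rcases lt_or_ge k p.natDegree with hk | hk
    · have hk1 : k ≤ p.natDegree - 1 := by omega
      rw [revAt_le hk1, coeff_derivative, coeff_reverse,
        revAt_le (by omega : p.natDegree - 1 - k + 1 ≤ p.natDegree)]
      have h1 : p.natDegree - (p.natDegree - 1 - k + 1) = k := by omega
      rw [h1]
      rcases Nat.eq_zero_or_pos k with rfl | hk0
      · simp only [coeff_sub, coeff_C_mul, mul_coeff_zero, coeff_X_zero, coeff_derivative,
          Nat.sub_zero, zero_mul]
        rw [Nat.cast_sub (by omega : 1 ≤ p.natDegree), coeff_C_zero]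
        push_cast
        ring
      · obtain ⟨j, rfl⟩ := Nat.exists_eq_add_of_lt hk0
        simp only [coeff_sub, coeff_C_mul, coeff_X_mul, coeff_derivative]
        rw [Nat.cast_sub hk1, Nat.cast_sub (by omega : 1 ≤ p.natDegree)]
        push_cast
        ring
    · -- k ≥ natDegree p
      have : ¬ (k ≤ p.natDegree - 1) := by omega
      rw [revAt_eq_self_of_lt (by omega : p.natDegree - 1 < k)]
      rw [coeff_eq_zero_of_natDegree_lt (by omega : (derivative p.reverse).natDegree < k)]
      rcases Nat.eq_or_lt_of_le hk with rfl | hk'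
      · simp only [coeff_sub, coeff_C_mul, coeff_natDegree]
        rcases Nat.exists_eq_add_of_lt hpos with ⟨j, hj⟩
        rw [hj, coeff_X_mul, coeff_derivative, ← hj, coeff_natDegree]
        have hc : ((0 + j : ℕ) : ℚ) + 1 = (p.natDegree : ℚ) := by
          have : (0 + j) + 1 = p.natDegree := by omega
          exact_mod_cast congrArg (Nat.cast : ℕ → ℚ) this
        rw [hc]
        ring
      · rw [coeff_sub, coeff_C_mul, coeff_eq_zero_of_natDegree_lt hk']
        obtain ⟨j, rfl⟩ := Nat.exists_eq_add_of_lt (by omega : 0 < k)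
        rw [coeff_X_mul, coeff_derivative, coeff_eq_zero_of_natDegree_lt (by omega)]
        ring


/-- For a monic divisor `g` of `X^n - 1` over `ℚ` and `f = (X^n - 1)/g`,
the polynomial `e_f = -(1/n) * ((f*)')* * g` maps to the principal idempotent of the
ideal generated by `g` in `ℚ[X]/(X^n - 1)`. -/
theorem stmt_9 (n : ℕ) (hn : 1 ≤ n)
    (g : ℚ[X]) (hmonic : g.Monic) (hdvd : g ∣ X ^ n - 1)
    (f : ℚ[X]) (hf : f = (X ^ n - 1) / g)
    (e : ℚ[X]) (he : e = -(C ((n : ℚ)⁻¹)) * (f.reverse.derivative).reverse * g) :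
    IsIdempotentElem (Ideal.Quotient.mk (Ideal.span {(X : ℚ[X]) ^ n - 1}) e) ∧
    Ideal.Quotient.mk (Ideal.span {(X : ℚ[X]) ^ n - 1}) e ∈
      Ideal.span {Ideal.Quotient.mk (Ideal.span {(X : ℚ[X]) ^ n - 1}) g} ∧
    ∀ h ∈ Ideal.span {Ideal.Quotient.mk (Ideal.span {(X : ℚ[X]) ^ n - 1}) g},
      Ideal.Quotient.mk (Ideal.span {(X : ℚ[X]) ^ n - 1}) e * h = h := by
  obtain ⟨m, rfl⟩ : ∃ m, n = m + 1 := ⟨n - 1, (Nat.succ_pred_eq_of_pos hn).symm⟩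
  set n := m + 1 with hn'
  have hfg : f * g = X ^ n - 1 := by
    rw [hf, mul_comm]; exact EuclideanDomain.mul_div_cancel' hmonic.ne_zero hdvd
  have hf0 : f.coeff 0 ≠ 0 := by
    intro h
    have := congrArg (fun p => coeff p 0) hfg
    simp only [mul_coeff_zero, h, zero_mul, coeff_sub, coeff_X_pow, coeff_one] at this
    simp [hn'] at this
  -- the key polynomial identity
  have hderiv : derivative f * g + f * derivative g = C ((n : ℕ) : ℚ) * X ^ m := by
    have h := congrArg derivative hfg
    rw [derivative_mul] at h
    simpa [derivative_X_pow, hn'] using h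
  have hninv : C (((n : ℕ) : ℚ))⁻¹ * C (((n : ℕ) : ℚ)) = 1 := by
    rw [← C_mul, inv_mul_cancel₀ (Nat.cast_ne_zero.mpr (by omega)), C_1]
  have hkey : e = 1 + f * (g - C (((n : ℕ) : ℚ))⁻¹ * (C ((f.natDegree : ℕ) : ℚ) * g
      + X * derivative g)) := by
    rw [he, rev_deriv f hf0]
    linear_combination (C (((n : ℕ) : ℚ))⁻¹ * X) * hderiv + (X : ℚ[X]) ^ n * hninv - hfg
  -- abbreviations
  set I : Ideal ℚ[X] := Ideal.span {(X : ℚ[X]) ^ n - 1}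
  set π := Ideal.Quotient.mk I
  have hegh : ∀ h : ℚ[X], π e * π (g * h) = π (g * h) := by
    intro h
    rw [← map_mul, ← sub_eq_zero, ← map_sub, Ideal.Quotient.eq_zero_iff_mem]
    have : e * (g * h) - g * h = (e - 1) * g * h := by ring
    rw [this, hkey]
    have : (1 + f * (g - C (((n : ℕ) : ℚ))⁻¹ * (C ((f.natDegree : ℕ) : ℚ) * g
        + X * derivative g)) - 1) * g * h
        = (X ^ n - 1) * ((g - C (((n : ℕ) : ℚ))⁻¹ * (C ((f.natDegree : ℕ) : ℚ) * g
        + X * derivative g)) * h) := by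
      rw [← hfg]; ring
    rw [this]
    exact Ideal.mul_mem_right _ _ (Ideal.subset_span rfl)
  have hmem : π e ∈ Ideal.span {π g} := by
    rw [he]
    refine Ideal.mem_span_singleton.mpr ⟨π (-(C ((n : ℚ)⁻¹)) * (f.reverse.derivative).reverse), ?_⟩
    rw [← map_mul]
    ring_nf
  refine ⟨?_, hmem, ?_⟩
  · obtain ⟨c, hc⟩ := Ideal.mem_span_singleton.mp hmem
    obtain ⟨c', rfl⟩ := Ideal.Quotient.mk_surjective c
    have hc2 : π e = π (g * c') := by rw [hc, map_mul]
    have h2 := hegh c'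
    rw [← hc2] at h2
    exact h2
  · intro h hh
    obtain ⟨c, hc⟩ := Ideal.mem_span_singleton.mp hh
    obtain ⟨c', rfl⟩ := Ideal.Quotient.mk_surjective c
    rw [hc, ← map_mul, hegh]
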